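/- Let X be a real random variable with E[X] = 0 and |X| ≤ A almost surely (A > 0), let λ ∈ [0, 1/2), and define the entire function F_λ(z) = e^{λz²} · (1/√(2π)) · ( E[(X − z) exp(−(z − X)²/2)] + 2λz · E[exp(−(z − X)²/2)] ) for z ∈ ℂ. Then |F_λ(A/(1−2λ))| ≥ (A/√(2π)) · exp(−(1/2 + 3/(2−4λ)) A²); consequently, for every B ≥ A/(1−2λ), the maximum of |F_λ(z)| over the closed disc {|z| ≤ B} is at least (A/√(2π)) exp(−(1/2 + 3/(2−4λ)) A²). -/

import Mathlib

open MeasureTheory Real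

/-- for zero-mean `X` with `|X| ≤ A` a.s. (`A > 0`) and `λ ∈ [0, 1/2)`, the
entire function `F_λ(z) = e^{λz²} (1/√(2π)) (E[(X−z) exp(−(z−X)²/2)] + 2λz E[exp(−(z−X)²/2)])`
satisfies `|F_λ(A/(1−2λ))| ≥ (A/√(2π)) exp(−(1/2 + 3/(2−4λ))A²)`; consequently, for every
`B ≥ A/(1−2λ)`, the maximum of `|F_λ|` over the closed disc `|z| ≤ B` is at least that bound. -/
theorem stmt_17 {Ω : Type*} [MeasurableSpace Ω] (μ : Measure Ω) [IsProbabilityMeasure μ]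
    (X : Ω → ℝ) (hXmeas : Measurable X) (A : ℝ) (hA : 0 < A)
    (hmean : ∫ ω, X ω ∂μ = 0)
    (hbd : ∀ᵐ ω ∂μ, |X ω| ≤ A)
    (lam : ℝ) (hlam : lam ∈ Set.Ico 0 (1 / 2 : ℝ))
    (F : ℂ → ℂ)
    (hF : ∀ z : ℂ, F z = Complex.exp ((lam : ℂ) * z ^ 2) *
      ((1 / Real.sqrt (2 * π) : ℝ) : ℂ) *
      ((∫ ω, ((X ω : ℂ) - z) * Complex.exp (-(z - (X ω : ℂ)) ^ 2 / 2) ∂μ) +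
        2 * (lam : ℂ) * z * ∫ ω, Complex.exp (-(z - (X ω : ℂ)) ^ 2 / 2) ∂μ)) :
    (A / Real.sqrt (2 * π)) * Real.exp (-((1 / 2 + 3 / (2 - 4 * lam)) * A ^ 2)) ≤
      ‖F ((A / (1 - 2 * lam) : ℝ) : ℂ)‖ ∧
    ∀ B : ℝ, A / (1 - 2 * lam) ≤ B →
      (A / Real.sqrt (2 * π)) * Real.exp (-((1 / 2 + 3 / (2 - 4 * lam)) * A ^ 2)) ≤
        sSup ((fun z => ‖F z‖) '' Metric.closedBall (0 : ℂ) B) := by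
  obtain ⟨hlam0, hlam2⟩ := hlam
  have ht : (0 : ℝ) < 1 - 2 * lam := by linarith
  obtain ⟨y, hy_def⟩ : ∃ y : ℝ, y = A / (1 - 2 * lam) := ⟨_, rfl⟩
  have hy : 0 < y := hy_def ▸ div_pos hA ht
  have hty : (1 - 2 * lam) * y = A := by
    rw [hy_def]; field_simp
  have hsqrt : 0 < Real.sqrt (2 * π) := Real.sqrt_pos.2 (by positivity)
  obtain ⟨E, hE_def⟩ : ∃ E : Ω → ℝ, E = fun ω => Real.exp (-(y - X ω) ^ 2 / 2) := ⟨_, rfl⟩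
  have hEmeas : Measurable E := by
    rw [hE_def]
    apply Measurable.exp
    exact ((measurable_const.sub hXmeas).pow measurable_const).neg.div_const 2
  have hEpos : ∀ ω, 0 < E ω := fun ω => hE_def ▸ Real.exp_pos _
  have hEle1 : ∀ ω, E ω ≤ 1 := by
    intro ω
    rw [hE_def]
    exact Real.exp_le_one_iff.2 (by nlinarith [sq_nonneg (y - X ω)])
  -- integrability facts
  have hXint : Integrable X μ := by
    refine Integrable.mono' (integrable_const A) hXmeas.aestronglyMeasurable ?_
    filter_upwards [hbd] with ω h using h
  have hint1 : Integrable (fun ω => (X ω - A) * E ω) μ := by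
    refine Integrable.mono' (integrable_const (A + A)) ?_ ?_
    · exact ((hXmeas.sub measurable_const).mul hEmeas).aestronglyMeasurable
    · filter_upwards [hbd] with ω h
      have h1 : |X ω - A| ≤ A + A := by
        rw [abs_le] at h ⊢; constructor <;> [linarith [h.1]; linarith [h.2]]
      calc ‖(X ω - A) * E ω‖ = |X ω - A| * |E ω| := abs_mul _ _
        _ ≤ (A + A) * 1 := by
            apply mul_le_mul h1 _ (abs_nonneg _) (by linarith)
            rw [abs_of_pos (hEpos ω)]; exact hEle1 ω
        _ = A + A := mul_one _
  have hint2 : Integrable (fun ω => (A - X ω) * Real.exp (-(y + A) ^ 2 / 2)) μ :=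
    ((integrable_const A).sub hXint).mul_const _
  -- the cast identity for the exponential factor
  have hcast : ∀ ω, Complex.exp (-(((y : ℝ) : ℂ) - (X ω : ℂ)) ^ 2 / 2) = ((E ω : ℝ) : ℂ) := by
    intro ω
    rw [hE_def, Complex.ofReal_exp]
    norm_cast
  -- key pointwise complex identity at z = y
  have hkey : ∀ ω, ((X ω : ℂ) - ((y : ℝ) : ℂ)) * Complex.exp (-(((y : ℝ) : ℂ) - (X ω : ℂ)) ^ 2 / 2)
      + 2 * (lam : ℂ) * ((y : ℝ) : ℂ) * Complex.exp (-(((y : ℝ) : ℂ) - (X ω : ℂ)) ^ 2 / 2)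
      = (((X ω - A) * E ω : ℝ) : ℂ) := by
    intro ω
    rw [hcast ω]
    have h0 : (X ω - A : ℝ) = (X ω - y) + 2 * lam * y := by rw [← hty]; ring
    rw [h0]
    push_cast
    ring
  -- value of F at y
  have hFy : ‖F ((y : ℝ) : ℂ)‖ =
      Real.exp (lam * y ^ 2) * (1 / Real.sqrt (2 * π)) * |∫ ω, (X ω - A) * E ω ∂μ| := by
    rw [hF]
    have hint1C : Integrable
        (fun ω => ((X ω : ℂ) - ((y : ℝ) : ℂ)) * Complex.exp (-(((y : ℝ) : ℂ) - (X ω : ℂ)) ^ 2 / 2)) μ := by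
      refine Integrable.mono' (integrable_const (A + y)) ?_ ?_
      · apply Measurable.aestronglyMeasurable
        apply Measurable.mul
        · exact (Complex.measurable_ofReal.comp hXmeas).sub measurable_const
        · exact Complex.measurable_exp.comp
            (((measurable_const.sub (Complex.measurable_ofReal.comp hXmeas)).pow
              measurable_const).neg.div_const 2)
      · filter_upwards [hbd] with ω h
        rw [hcast ω]
        have hxy : ‖(X ω : ℂ) - ((y : ℝ) : ℂ)‖ ≤ A + y := by
          rw [← Complex.ofReal_sub, Complex.norm_real, Real.norm_eq_abs]
          rw [abs_le] at h ⊢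
          constructor <;> [linarith [h.1, hy.le]; linarith [h.2, hy.le]]
        calc ‖((X ω : ℂ) - ((y : ℝ) : ℂ)) * ((E ω : ℝ) : ℂ)‖
            = ‖(X ω : ℂ) - ((y : ℝ) : ℂ)‖ * |E ω| := by
              rw [norm_mul, Complex.norm_real, Real.norm_eq_abs]
          _ ≤ (A + y) * 1 := by
              apply mul_le_mul hxy _ (abs_nonneg _) (le_trans (norm_nonneg _) hxy)
              rw [abs_of_pos (hEpos ω)]; exact hEle1 ω
          _ = A + y := mul_one _
    have hint2C : Integrable
        (fun ω => 2 * (lam : ℂ) * ((y : ℝ) : ℂ) * Complex.exp (-(((y : ℝ) : ℂ) - (X ω : ℂ)) ^ 2 / 2)) μ := by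
      refine Integrable.mono' (integrable_const (2 * lam * y)) ?_ ?_
      · apply Measurable.aestronglyMeasurable
        exact measurable_const.mul (Complex.measurable_exp.comp
          (((measurable_const.sub (Complex.measurable_ofReal.comp hXmeas)).pow
            measurable_const).neg.div_const 2))
      · refine Filter.Eventually.of_forall fun ω => ?_
        rw [hcast ω, norm_mul, Complex.norm_real]
        have h1 : ‖2 * (lam : ℂ) * ((y : ℝ) : ℂ)‖ = 2 * lam * y := by
          rw [show (2 : ℂ) * (lam : ℂ) * ((y : ℝ) : ℂ) = ((2 * lam * y : ℝ) : ℂ) by push_cast; ring,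
            Complex.norm_real, Real.norm_eq_abs, abs_of_nonneg (by positivity)]
        rw [h1]
        calc 2 * lam * y * |E ω| ≤ 2 * lam * y * 1 := by
              apply mul_le_mul_of_nonneg_left _ (by positivity)
              rw [abs_of_pos (hEpos ω)]; exact hEle1 ω
          _ = 2 * lam * y := mul_one _
    have hcomb : (∫ ω, ((X ω : ℂ) - ((y : ℝ) : ℂ)) * Complex.exp (-(((y : ℝ) : ℂ) - (X ω : ℂ)) ^ 2 / 2) ∂μ) +
        2 * (lam : ℂ) * ((y : ℝ) : ℂ) * ∫ ω, Complex.exp (-(((y : ℝ) : ℂ) - (X ω : ℂ)) ^ 2 / 2) ∂μ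
        = (((∫ ω, (X ω - A) * E ω ∂μ : ℝ)) : ℂ) := by
      rw [← integral_const_mul, ← integral_add hint1C hint2C]
      rw [show (fun ω => ((X ω : ℂ) - ((y : ℝ) : ℂ)) * Complex.exp (-(((y : ℝ) : ℂ) - (X ω : ℂ)) ^ 2 / 2)
          + 2 * (lam : ℂ) * ((y : ℝ) : ℂ) * Complex.exp (-(((y : ℝ) : ℂ) - (X ω : ℂ)) ^ 2 / 2))
          = fun ω => (((X ω - A) * E ω : ℝ) : ℂ) from funext hkey]
      exact integral_ofReal
    rw [hcomb]
    simp only [norm_mul, Complex.norm_real, Real.norm_eq_abs]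
    congr 1
    congr 1
    · rw [show ((lam : ℂ) * ((y : ℝ) : ℂ) ^ 2) = ((lam * y ^ 2 : ℝ) : ℂ) by push_cast; ring,
        Complex.norm_exp, Complex.ofReal_re]
    · rw [abs_of_pos (by positivity)]
  -- lower bound on |∫ (X - A) E|
  have hneg : ∫ ω, (X ω - A) * E ω ∂μ ≤ 0 := by
    rw [← integral_zero Ω ℝ (μ := μ)]
    apply integral_mono_ae hint1 (integrable_const 0)
    filter_upwards [hbd] with ω h
    have hXA : X ω - A ≤ 0 := by rw [abs_le] at h; linarith [h.2]
    exact mul_nonpos_of_nonpos_of_nonneg hXA (hEpos ω).le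
  have hlower : A * Real.exp (-(y + A) ^ 2 / 2) ≤ |∫ ω, (X ω - A) * E ω ∂μ| := by
    rw [abs_of_nonpos hneg]
    have h1 : ∫ ω, (A - X ω) * Real.exp (-(y + A) ^ 2 / 2) ∂μ ≤ ∫ ω, (A - X ω) * E ω ∂μ := by
      apply integral_mono_ae hint2
      · have heq : (fun ω => (A - X ω) * E ω) = fun ω => -((X ω - A) * E ω) := by
          funext ω; ring
        rw [heq]; exact hint1.neg
      · filter_upwards [hbd] with ω h
        apply mul_le_mul_of_nonneg_left _ (by rw [abs_le] at h; linarith [h.2])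
        rw [hE_def]
        apply Real.exp_le_exp.2
        rw [abs_le] at h
        nlinarith [hy.le, h.1, h.2, mul_nonneg hy.le (by linarith [h.1] : (0:ℝ) ≤ X ω + A)]
    have h2 : ∫ ω, (A - X ω) * Real.exp (-(y + A) ^ 2 / 2) ∂μ
        = A * Real.exp (-(y + A) ^ 2 / 2) := by
      rw [integral_mul_const, integral_sub (integrable_const A) hXint, hmean,
        integral_const]
      simp [measure_univ]
    have h3 : ∫ ω, (A - X ω) * E ω ∂μ = -∫ ω, (X ω - A) * E ω ∂μ := by
      rw [← integral_neg]
      congr 1; funext ω; ring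
    linarith [h1, h2, h3]
  -- exponent identity
  have hexp : Real.exp (lam * y ^ 2) * (1 / Real.sqrt (2 * π)) * (A * Real.exp (-(y + A) ^ 2 / 2))
      = (A / Real.sqrt (2 * π)) * Real.exp (-((1 / 2 + 3 / (2 - 4 * lam)) * A ^ 2)) := by
    have harg : lam * y ^ 2 + -(y + A) ^ 2 / 2 = -((1 / 2 + 3 / (2 - 4 * lam)) * A ^ 2) := by
      rw [hy_def]
      have h2t : (2 : ℝ) - 4 * lam ≠ 0 := by intro h; nlinarith
      have h1t : (1 : ℝ) - 2 * lam ≠ 0 := ne_of_gt ht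
      rw [show (2 : ℝ) - 4 * lam = 2 * (1 - 2 * lam) by ring]
      generalize hT : 1 - 2 * lam = T at *
      rw [show lam = (1 - T) / 2 by linarith]
      field_simp
      ring
    rw [← harg, Real.exp_add]
    ring
  -- main lower bound at y
  have hmain : (A / Real.sqrt (2 * π)) * Real.exp (-((1 / 2 + 3 / (2 - 4 * lam)) * A ^ 2)) ≤
      ‖F ((y : ℝ) : ℂ)‖ := by
    rw [hFy, ← hexp]
    exact mul_le_mul_of_nonneg_left hlower (by positivity)
  have hyy : ((A / (1 - 2 * lam) : ℝ) : ℂ) = ((y : ℝ) : ℂ) := by rw [hy_def]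
  constructor
  · rw [hyy]; exact hmain
  · intro B hB
    rw [← hy_def] at hB
    have hBpos : 0 < B := lt_of_lt_of_le hy hB
    -- a uniform bound for the exponential factor on the ball
    have hbdd : BddAbove ((fun z => ‖F z‖) '' Metric.closedBall (0 : ℂ) B) := by
      refine ⟨Real.exp (lam * B ^ 2) * (1 / Real.sqrt (2 * π)) *
        ((A + B) * Real.exp ((B + A) ^ 2 / 2) + 2 * lam * B * Real.exp ((B + A) ^ 2 / 2)), ?_⟩
      rintro r ⟨z, hz, rfl⟩
      rw [Metric.mem_closedBall, dist_zero_right] at hz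
      show ‖F z‖ ≤ _
      rw [hF, norm_mul, norm_mul, Complex.norm_real, Real.norm_eq_abs, abs_of_pos (by positivity)]
      have hebound : ∀ᵐ ω ∂μ, ‖Complex.exp (-(z - (X ω : ℂ)) ^ 2 / 2)‖ ≤
          Real.exp ((B + A) ^ 2 / 2) := by
        filter_upwards [hbd] with ω h
        rw [Complex.norm_exp]
        apply Real.exp_le_exp.2
        have habs : ‖-(z - (X ω : ℂ)) ^ 2 / 2‖ = ‖z - (X ω : ℂ)‖ ^ 2 / 2 := by
          rw [norm_div, norm_neg, norm_pow, Complex.norm_two]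
        have hzx : ‖z - (X ω : ℂ)‖ ≤ B + A := by
          calc ‖z - (X ω : ℂ)‖ ≤ ‖z‖ + ‖(X ω : ℂ)‖ :=
                norm_sub_le _ _
            _ ≤ B + A := by
                rw [Complex.norm_real, Real.norm_eq_abs]
                exact add_le_add hz h
        calc (-(z - (X ω : ℂ)) ^ 2 / 2).re ≤ |(-(z - (X ω : ℂ)) ^ 2 / 2).re| := le_abs_self _
          _ ≤ ‖-(z - (X ω : ℂ)) ^ 2 / 2‖ := Complex.abs_re_le_norm _
          _ = ‖z - (X ω : ℂ)‖ ^ 2 / 2 := habs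
          _ ≤ (B + A) ^ 2 / 2 := by
              nlinarith [norm_nonneg (z - (X ω : ℂ)), hzx]
      have habs_exp : ‖Complex.exp ((lam : ℂ) * z ^ 2)‖ ≤ Real.exp (lam * B ^ 2) := by
        rw [Complex.norm_exp]
        apply Real.exp_le_exp.2
        have h3 : ‖(lam : ℂ) * z ^ 2‖ = lam * ‖z‖ ^ 2 := by
          rw [norm_mul, norm_pow, Complex.norm_real, Real.norm_eq_abs, abs_of_nonneg hlam0]
        calc ((lam : ℂ) * z ^ 2).re ≤ |((lam : ℂ) * z ^ 2).re| := le_abs_self _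
          _ ≤ ‖(lam : ℂ) * z ^ 2‖ := Complex.abs_re_le_norm _
          _ = lam * ‖z‖ ^ 2 := h3
          _ ≤ lam * B ^ 2 := by
              apply mul_le_mul_of_nonneg_left _ hlam0
              exact pow_le_pow_left₀ (norm_nonneg z) hz 2
      have hI1 : ‖∫ ω, ((X ω : ℂ) - z) * Complex.exp (-(z - (X ω : ℂ)) ^ 2 / 2) ∂μ‖ ≤
          (A + B) * Real.exp ((B + A) ^ 2 / 2) := by
        have hh := norm_integral_le_of_norm_le_const (μ := μ)
          (f := fun ω => ((X ω : ℂ) - z) * Complex.exp (-(z - (X ω : ℂ)) ^ 2 / 2))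
          (C := (A + B) * Real.exp ((B + A) ^ 2 / 2)) ?_
        · simpa using hh
        · filter_upwards [hbd, hebound] with ω h he
          rw [norm_mul]
          apply mul_le_mul _ he (norm_nonneg _) (by positivity)
          calc ‖(X ω : ℂ) - z‖ ≤ ‖((X ω : ℝ) : ℂ)‖ + ‖z‖ := norm_sub_le _ _
            _ ≤ A + B := by
                rw [Complex.norm_real]
                exact add_le_add h hz
      have hI2 : ‖∫ ω, Complex.exp (-(z - (X ω : ℂ)) ^ 2 / 2) ∂μ‖ ≤ Real.exp ((B + A) ^ 2 / 2) := by
        have hh := norm_integral_le_of_norm_le_const (μ := μ)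
          (f := fun ω => Complex.exp (-(z - (X ω : ℂ)) ^ 2 / 2))
          (C := Real.exp ((B + A) ^ 2 / 2)) hebound
        simpa using hh
      have hsum : ‖(∫ ω, ((X ω : ℂ) - z) * Complex.exp (-(z - (X ω : ℂ)) ^ 2 / 2) ∂μ) +
            2 * (lam : ℂ) * z * ∫ ω, Complex.exp (-(z - (X ω : ℂ)) ^ 2 / 2) ∂μ‖ ≤
          (A + B) * Real.exp ((B + A) ^ 2 / 2) + 2 * lam * B * Real.exp ((B + A) ^ 2 / 2) := by
        calc ‖(∫ ω, ((X ω : ℂ) - z) * Complex.exp (-(z - (X ω : ℂ)) ^ 2 / 2) ∂μ) +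
              2 * (lam : ℂ) * z * ∫ ω, Complex.exp (-(z - (X ω : ℂ)) ^ 2 / 2) ∂μ‖
            ≤ ‖∫ ω, ((X ω : ℂ) - z) * Complex.exp (-(z - (X ω : ℂ)) ^ 2 / 2) ∂μ‖ +
              ‖2 * (lam : ℂ) * z * ∫ ω, Complex.exp (-(z - (X ω : ℂ)) ^ 2 / 2) ∂μ‖ := by
              exact norm_add_le _ _
          _ = ‖∫ ω, ((X ω : ℂ) - z) * Complex.exp (-(z - (X ω : ℂ)) ^ 2 / 2) ∂μ‖ +
              ‖2 * (lam : ℂ) * z‖ * ‖∫ ω, Complex.exp (-(z - (X ω : ℂ)) ^ 2 / 2) ∂μ‖ := by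
              rw [norm_mul]
          _ ≤ (A + B) * Real.exp ((B + A) ^ 2 / 2) + 2 * lam * B * Real.exp ((B + A) ^ 2 / 2) := by
              apply add_le_add hI1
              have h2lz : ‖2 * (lam : ℂ) * z‖ ≤ 2 * lam * B := by
                rw [norm_mul, norm_mul]
                have : ‖(2 : ℂ)‖ * ‖(lam : ℂ)‖ = 2 * lam := by
                  simp [Complex.norm_real, abs_of_nonneg hlam0]
                rw [this]
                exact mul_le_mul_of_nonneg_left hz (by positivity)
              apply mul_le_mul h2lz hI2 (norm_nonneg _) (by positivity)
      exact mul_le_mul (mul_le_mul_of_nonneg_right habs_exp (by positivity)) hsum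
        (norm_nonneg _) (by positivity)
    have hmem : ‖F ((y : ℝ) : ℂ)‖ ∈
        (fun z => ‖F z‖) '' Metric.closedBall (0 : ℂ) B := by
      refine ⟨((y : ℝ) : ℂ), ?_, rfl⟩
      rw [Metric.mem_closedBall, dist_zero_right, Complex.norm_real, Real.norm_eq_abs,
        abs_of_pos hy]
      exact hB
    exact hmain.trans (le_csSup hbdd hmem)
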